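/- If f is strictly convex and all relevant densities and conditional densities are positive, then I_f(X;Y) = I_f(g(X);Y) if and only if Y and X are conditionally independent given g(X). -/

import Mathlib

open MeasureTheory Set Filter
open scoped ENNReal NNReal Topology

noncomputable def lowerSlope (f : ℝ → ℝ) (b : ℝ) : ℝ :=
  sSup ((fun x => (f b - f x) / (b - x)) '' Set.Ioo 0 b)

section Slope
variable {f : ℝ → ℝ}

lemma lowerSlope_bddAbove (hconv : StrictConvexOn ℝ (Set.Ioi 0) f) {b : ℝ} (hb : 0 < b) :
    ∀ v ∈ (fun x => (f b - f x) / (b - x)) '' Set.Ioo 0 b, v ≤ (f (b + 1) - f b) / (b + 1 - b) := by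
  rintro v ⟨x, hx, rfl⟩
  exact hconv.convexOn.slope_mono_adjacent hx.1 (by simp; linarith) hx.2 (by linarith)

lemma lowerSlope_nonempty {b : ℝ} (hb : 0 < b) :
    ((fun x => (f b - f x) / (b - x)) '' Set.Ioo 0 b).Nonempty :=
  ⟨_, ⟨b / 2, ⟨by linarith, by linarith⟩, rfl⟩⟩

lemma le_lowerSlope (hconv : StrictConvexOn ℝ (Set.Ioi 0) f) {b x : ℝ} (hb : 0 < b)
    (hx : x ∈ Set.Ioo 0 b) :
    (f b - f x) / (b - x) ≤ lowerSlope f b :=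
  le_csSup ⟨_, lowerSlope_bddAbove hconv hb⟩ ⟨x, hx, rfl⟩

lemma lowerSlope_le {b c : ℝ} (hb : 0 < b)
    (hc : ∀ x ∈ Set.Ioo 0 b, (f b - f x) / (b - x) ≤ c) : lowerSlope f b ≤ c :=
  csSup_le (lowerSlope_nonempty hb) (by rintro v ⟨x, hx, rfl⟩; exact hc x hx)

/-- strict subgradient inequality -/
lemma lowerSlope_subgradient (hconv : StrictConvexOn ℝ (Set.Ioi 0) f) {a b : ℝ}
    (ha : 0 < a) (hb : 0 < b) (hab : a ≠ b) :
    f b + lowerSlope f b * (a - b) < f a := by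
  rcases lt_or_gt_of_ne hab with h | h
  · -- a < b
    set m := (a + b) / 2 with hm
    have ham : a < m := by rw [hm]; linarith
    have hmb : m < b := by rw [hm]; linarith
    have hm0 : 0 < m := by linarith
    have h1 : (f a - f b) / (a - b) < (f m - f b) / (m - b) :=
      hconv.secant_strict_mono (Set.mem_Ioi.2 hb) (Set.mem_Ioi.2 ha) (Set.mem_Ioi.2 hm0)
        (by intro hc; exact hab hc) (by intro hc; exact absurd hc (ne_of_lt hmb)) ham
    have h2 : (f b - f m) / (b - m) ≤ lowerSlope f b :=
      le_lowerSlope hconv hb ⟨hm0, hmb⟩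
    have h3 : (f a - f b) / (a - b) = (f b - f a) / (b - a) := by
      rw [← neg_div_neg_eq]; ring_nf
    have h4 : (f m - f b) / (m - b) = (f b - f m) / (b - m) := by
      rw [← neg_div_neg_eq]; ring_nf
    have h5 : (f b - f a) / (b - a) < lowerSlope f b := by
      rw [h3, h4] at h1; linarith
    have hba : 0 < b - a := by linarith
    have := (div_lt_iff₀ hba).mp h5
    nlinarith
  · -- b < a
    set m := (a + b) / 2 with hm
    have hbm : b < m := by rw [hm]; linarith
    have hma : m < a := by rw [hm]; linarith
    have hm0 : 0 < m := by linarith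
    have h1 : lowerSlope f b ≤ (f m - f b) / (m - b) := by
      apply lowerSlope_le hb
      intro x hx
      exact hconv.convexOn.slope_mono_adjacent (Set.mem_Ioi.2 hx.1) (Set.mem_Ioi.2 hm0) hx.2 hbm
    have h2 : (f m - f b) / (m - b) < (f a - f b) / (a - b) :=
      hconv.secant_strict_mono (Set.mem_Ioi.2 hb) (Set.mem_Ioi.2 hm0) (Set.mem_Ioi.2 ha)
        (ne_of_gt hbm) (ne_of_gt h) hma
    have h3 : lowerSlope f b < (f a - f b) / (a - b) := lt_of_le_of_lt h1 h2
    have hab' : 0 < a - b := by linarith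
    have := (lt_div_iff₀ hab').mp h3
    linarith

lemma lowerSlope_monotoneOn (hconv : StrictConvexOn ℝ (Set.Ioi 0) f) :
    MonotoneOn (lowerSlope f) (Set.Ioi 0) := by
  intro b1 hb1 b2 hb2 h12
  rcases eq_or_lt_of_le h12 with rfl | h12
  · exact le_rfl
  apply lowerSlope_le hb1
  intro x hx
  calc (f b1 - f x) / (b1 - x) ≤ (f b2 - f b1) / (b2 - b1) :=
        hconv.convexOn.slope_mono_adjacent (Set.mem_Ioi.2 hx.1) hb2 hx.2 h12
    _ ≤ lowerSlope f b2 := le_lowerSlope hconv hb2 ⟨hb1, h12⟩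

lemma lowerSlope_exp_monotone (hconv : StrictConvexOn ℝ (Set.Ioi 0) f) :
    Monotone (fun t => lowerSlope f (Real.exp t)) := by
  intro t1 t2 h
  exact lowerSlope_monotoneOn hconv (Real.exp_pos t1) (Real.exp_pos t2)
    (Real.exp_le_exp.2 h)

lemma lowerSlope_comp_measurable (hconv : StrictConvexOn ℝ (Set.Ioi 0) f)
    {α : Type*} [MeasurableSpace α] {u : α → ℝ}
    (hu : Measurable u) (hupos : ∀ a, 0 < u a) :
    Measurable (fun a => lowerSlope f (u a)) := by
  have h1 : Measurable (fun t => lowerSlope f (Real.exp t)) :=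
    (lowerSlope_exp_monotone hconv).measurable
  have h2 : (fun a => lowerSlope f (u a))
      = (fun t => lowerSlope f (Real.exp t)) ∘ (fun a => Real.log (u a)) := by
    funext a; simp [Function.comp, Real.exp_log (hupos a)]
  rw [h2]
  exact h1.comp (hu.log)

lemma convex_comp_measurable (hconv : StrictConvexOn ℝ (Set.Ioi 0) f)
    {α : Type*} [MeasurableSpace α] {u : α → ℝ}
    (hu : Measurable u) (hupos : ∀ a, 0 < u a) :
    Measurable (fun a => f (u a)) := by
  have hcont : ContinuousOn f (Set.Ioi 0) := hconv.convexOn.continuousOn isOpen_Ioi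
  have h1 : Continuous ((Set.Ioi (0:ℝ)).restrict f) := continuousOn_iff_continuous_restrict.mp hcont
  have h2 : Measurable (fun a => (⟨u a, hupos a⟩ : Set.Ioi (0:ℝ))) :=
    Measurable.subtype_mk hu
  exact h1.measurable.comp h2

end Slope

lemma aux_fst_wd {α β : Type*} [MeasurableSpace α] [MeasurableSpace β]
    (κ : Measure α) (lam : Measure β) [SigmaFinite κ] [SigmaFinite lam]
    {h : α × β → ℝ≥0∞} (hh : Measurable h) :
    Measure.map Prod.fst ((κ.prod lam).withDensity h)
      = κ.withDensity (fun a => ∫⁻ b, h (a, b) ∂lam) := by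
  ext s hs
  rw [Measure.map_apply measurable_fst hs, withDensity_apply _ (measurable_fst hs),
    withDensity_apply _ hs]
  have hpre : Prod.fst ⁻¹' s = s ×ˢ (univ : Set β) := by
    ext z; simp
  rw [hpre, ← Measure.prod_restrict, lintegral_prod _ hh.aemeasurable]
  simp [Measure.restrict_univ]

theorem f_mutual_information_equality_iff_cond_indep
    {X Y : Type*} [MeasurableSpace X] [MeasurableSpace Y] (d : ℕ)
    (μ : Measure X) (ν : Measure Y) (ρ : Measure (Fin d → ℝ))
    [SigmaFinite μ] [SigmaFinite ν] [SigmaFinite ρ]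
    (f : ℝ → ℝ) (hconv : StrictConvexOn ℝ (Set.Ioi 0) f) (hf1 : f 1 = 0)
    (g : X → (Fin d → ℝ)) (hg : Measurable g)
    (pXY : X × Y → ℝ) (pGY : (Fin d → ℝ) × Y → ℝ)
    (pX : X → ℝ) (pY : Y → ℝ) (pG : (Fin d → ℝ) → ℝ)
    (hpXYmeas : Measurable pXY) (hpGYmeas : Measurable pGY)
    (hpXmeas : Measurable pX) (hpYmeas : Measurable pY) (hpGmeas : Measurable pG)
    (hpXYpos : ∀ z, 0 < pXY z) (hpGYpos : ∀ w, 0 < pGY w)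
    (hpXpos : ∀ x, 0 < pX x) (hpYpos : ∀ y, 0 < pY y) (hpGpos : ∀ v, 0 < pG v)
    -- `pXY` is a probability density
    (hp1 : ∫ z, pXY z ∂(μ.prod ν) = 1)
    -- `pGY` is the joint density of `(g(X), Y)`
    (hmap : Measure.map (fun z : X × Y => (g z.1, z.2))
        ((μ.prod ν).withDensity fun z => ENNReal.ofReal (pXY z))
      = (ρ.prod ν).withDensity fun w => ENNReal.ofReal (pGY w))
    -- marginal densities
    (hpXmarg : ∀ᵐ x ∂μ, ∫ y, pXY (x, y) ∂ν = pX x)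
    (hpYmarg : ∀ᵐ y ∂ν, ∫ x, pXY (x, y) ∂μ = pY y)
    (hpGmarg : ∀ᵐ v ∂ρ, ∫ y, pGY (v, y) ∂ν = pG v)
    -- the integrals defining the `f`-mutual informations are well defined
    (hintXY : Integrable (fun z : X × Y =>
      pX z.1 * pY z.2 * f (pXY z / (pX z.1 * pY z.2))) (μ.prod ν))
    (hintGY : Integrable (fun w : (Fin d → ℝ) × Y =>
      pG w.1 * pY w.2 * f (pGY w / (pG w.1 * pY w.2))) (ρ.prod ν)) :
    (∫ z : X × Y, pX z.1 * pY z.2 * f (pXY z / (pX z.1 * pY z.2)) ∂(μ.prod ν)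
        = ∫ w : (Fin d → ℝ) × Y,
            pG w.1 * pY w.2 * f (pGY w / (pG w.1 * pY w.2)) ∂(ρ.prod ν))
      ↔ (∀ᵐ z ∂(μ.prod ν), pXY z * pG (g z.1) = pGY (g z.1, z.2) * pX z.1) := by
  classical
  have hTmeas : Measurable (fun z : X × Y => (g z.1, z.2)) :=
    (hg.comp measurable_fst).prodMk measurable_snd
  -- positivity facts
  have hq_pos : ∀ z : X × Y, 0 < pX z.1 * pY z.2 := fun z =>
    mul_pos (hpXpos _) (hpYpos _)
  have hq'_pos : ∀ w : ((Fin d → ℝ) × Y), 0 < pG w.1 * pY w.2 := fun w => mul_pos (hpGpos _) (hpYpos _)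
  -- measurability of ratios
  have hrmeas : Measurable (fun z : X × Y => pXY z / (pX z.1 * pY z.2)) :=
    hpXYmeas.div ((hpXmeas.comp measurable_fst).mul (hpYmeas.comp measurable_snd))
  have hr'meas : Measurable (fun w : ((Fin d → ℝ) × Y) => pGY w / (pG w.1 * pY w.2)) :=
    hpGYmeas.div ((hpGmeas.comp measurable_fst).mul (hpYmeas.comp measurable_snd))
  have hr_pos : ∀ z : X × Y, 0 < pXY z / (pX z.1 * pY z.2) := fun z =>
    div_pos (hpXYpos z) (hq_pos z)
  have hr'_pos : ∀ w : ((Fin d → ℝ) × Y), 0 < pGY w / (pG w.1 * pY w.2) := fun w =>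
    div_pos (hpGYpos w) (hq'_pos w)
  have hfr_meas : Measurable (fun z : X × Y => f (pXY z / (pX z.1 * pY z.2))) :=
    convex_comp_measurable hconv hrmeas hr_pos
  have hfr'_meas : Measurable (fun w : ((Fin d → ℝ) × Y) => f (pGY w / (pG w.1 * pY w.2))) :=
    convex_comp_measurable hconv hr'meas hr'_pos
  -- integrability of pXY
  have h_int_pXY : Integrable pXY (μ.prod ν) := by
    by_contra hc
    rw [integral_undef hc] at hp1
    exact one_ne_zero hp1.symm
  have hPuniv : ∫⁻ z, ENNReal.ofReal (pXY z) ∂(μ.prod ν) = 1 := by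
    rw [← ofReal_integral_eq_lintegral_ofReal h_int_pXY
      (ae_of_all _ fun z => (hpXYpos z).le), hp1, ENNReal.ofReal_one]
  have hGuniv : ∫⁻ w, ENNReal.ofReal (pGY w) ∂(ρ.prod ν) = 1 := by
    have h1 := congrArg (fun m : Measure ((Fin d → ℝ) × Y) => m Set.univ) hmap
    simp only [Measure.map_apply hTmeas MeasurableSet.univ, Set.preimage_univ] at h1
    rw [withDensity_apply _ MeasurableSet.univ, withDensity_apply _ MeasurableSet.univ,
      Measure.restrict_univ, Measure.restrict_univ] at h1
    rw [← h1, hPuniv]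
  have h_int_pGY : Integrable pGY (ρ.prod ν) := by
    refine ⟨hpGYmeas.aestronglyMeasurable, ?_⟩
    rw [hasFiniteIntegral_iff_ofReal (ae_of_all _ fun w => (hpGYpos w).le), hGuniv]
    exact ENNReal.one_lt_top
  -- the pushforward of the marginal density measure
  have hM : Measure.map g (μ.withDensity fun x => ENNReal.ofReal (pX x))
      = ρ.withDensity fun v => ENNReal.ofReal (pG v) := by
    have hXside : Measure.map Prod.fst
        ((μ.prod ν).withDensity fun z => ENNReal.ofReal (pXY z))
        = μ.withDensity fun x => ENNReal.ofReal (pX x) := by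
      rw [aux_fst_wd μ ν hpXYmeas.ennreal_ofReal]
      apply withDensity_congr_ae
      filter_upwards [hpXmarg, h_int_pXY.prod_right_ae] with x hx hint
      rw [← ofReal_integral_eq_lintegral_ofReal hint
        (ae_of_all _ fun y => (hpXYpos (x, y)).le), hx]
    have hGside : Measure.map Prod.fst
        ((ρ.prod ν).withDensity fun w => ENNReal.ofReal (pGY w))
        = ρ.withDensity fun v => ENNReal.ofReal (pG v) := by
      rw [aux_fst_wd ρ ν hpGYmeas.ennreal_ofReal]
      apply withDensity_congr_ae
      filter_upwards [hpGmarg, h_int_pGY.prod_right_ae] with v hv hint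
      rw [← ofReal_integral_eq_lintegral_ofReal hint
        (ae_of_all _ fun y => (hpGYpos (v, y)).le), hv]
    calc Measure.map g (μ.withDensity fun x => ENNReal.ofReal (pX x))
        = Measure.map g (Measure.map Prod.fst
            ((μ.prod ν).withDensity fun z => ENNReal.ofReal (pXY z))) := by rw [hXside]
      _ = Measure.map Prod.fst (Measure.map (fun z : X × Y => (g z.1, z.2))
            ((μ.prod ν).withDensity fun z => ENNReal.ofReal (pXY z))) := by
          rw [Measure.map_map hg measurable_fst, Measure.map_map measurable_fst hTmeas]
          rfl
      _ = Measure.map Prod.fst ((ρ.prod ν).withDensity fun w => ENNReal.ofReal (pGY w)) := by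
          rw [hmap]
      _ = ρ.withDensity fun v => ENNReal.ofReal (pG v) := hGside
  -- the key change-of-variables identity
  have hK : ∀ χ : ((Fin d → ℝ) × Y) → ℝ≥0∞, Measurable χ →
      ∫⁻ z : X × Y, χ (g z.1, z.2) * ENNReal.ofReal (pX z.1) ∂(μ.prod ν)
        = ∫⁻ w : ((Fin d → ℝ) × Y), χ w * ENNReal.ofReal (pG w.1) ∂(ρ.prod ν) := by
    intro χ hχ
    have hmeasL : Measurable fun z : X × Y => χ (g z.1, z.2) * ENNReal.ofReal (pX z.1) :=
      (hχ.comp hTmeas).mul ((hpXmeas.comp measurable_fst).ennreal_ofReal)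
    have hmeasR : Measurable fun w : ((Fin d → ℝ) × Y) => χ w * ENNReal.ofReal (pG w.1) :=
      hχ.mul ((hpGmeas.comp measurable_fst).ennreal_ofReal)
    rw [lintegral_prod_symm' _ hmeasL, lintegral_prod_symm' _ hmeasR]
    refine lintegral_congr fun y => ?_
    have hχy : Measurable fun v => χ (v, y) := hχ.comp (measurable_id.prodMk measurable_const)
    have hcomp : Measurable fun x => χ (g x, y) := hχy.comp hg
    calc ∫⁻ x, χ (g x, y) * ENNReal.ofReal (pX x) ∂μ
        = ∫⁻ v, χ (v, y) ∂(Measure.map g (μ.withDensity fun x => ENNReal.ofReal (pX x))) := by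
          rw [lintegral_map hχy hg,
            lintegral_withDensity_eq_lintegral_mul _ hpXmeas.ennreal_ofReal hcomp]
          exact lintegral_congr fun x => by simp [mul_comm]
      _ = ∫⁻ v, χ (v, y) ∂(ρ.withDensity fun v => ENNReal.ofReal (pG v)) := by rw [hM]
      _ = ∫⁻ v, χ (v, y) * ENNReal.ofReal (pG v) ∂ρ := by
          rw [lintegral_withDensity_eq_lintegral_mul _ hpGmeas.ennreal_ofReal hχy]
          exact lintegral_congr fun v => by simp [mul_comm]
  -- pointwise identity for the density `s`
  have hχSmeas : Measurable (fun w : ((Fin d → ℝ) × Y) => ENNReal.ofReal (pGY w) / ENNReal.ofReal (pG w.1)) :=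
    hpGYmeas.ennreal_ofReal.div ((hpGmeas.comp measurable_fst).ennreal_ofReal)
  have hofs : ∀ z : X × Y,
      ENNReal.ofReal (pGY (g z.1, z.2) * pX z.1 / pG (g z.1))
        = (ENNReal.ofReal (pGY (g z.1, z.2)) / ENNReal.ofReal (pG (g z.1)))
            * ENNReal.ofReal (pX z.1) := by
    intro z
    rw [mul_div_right_comm, ENNReal.ofReal_mul (le_of_lt (div_pos (hpGYpos _) (hpGpos _))),
      ENNReal.ofReal_div_of_pos (hpGpos _)]
  have hcancel : ∀ w : ((Fin d → ℝ) × Y),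
      (ENNReal.ofReal (pGY w) / ENNReal.ofReal (pG w.1)) * ENNReal.ofReal (pG w.1)
        = ENNReal.ofReal (pGY w) := fun w =>
    ENNReal.div_mul_cancel (ne_of_gt (ENNReal.ofReal_pos.2 (hpGpos _))) ENNReal.ofReal_ne_top
  have hsmeas : Measurable (fun z : X × Y => pGY (g z.1, z.2) * pX z.1 / pG (g z.1)) :=
    ((hpGYmeas.comp hTmeas).mul (hpXmeas.comp measurable_fst)).div
      (hpGmeas.comp (hg.comp measurable_fst))
  have hs_nonneg : ∀ z : X × Y, 0 ≤ pGY (g z.1, z.2) * pX z.1 / pG (g z.1) := fun z =>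
    le_of_lt (div_pos (mul_pos (hpGYpos _) (hpXpos _)) (hpGpos _))
  have hS_lint : ∫⁻ z, ENNReal.ofReal (pGY (g z.1, z.2) * pX z.1 / pG (g z.1)) ∂(μ.prod ν)
      = 1 := by
    calc ∫⁻ z, ENNReal.ofReal (pGY (g z.1, z.2) * pX z.1 / pG (g z.1)) ∂(μ.prod ν)
        = ∫⁻ z : X × Y, (fun w : ((Fin d → ℝ) × Y) => ENNReal.ofReal (pGY w) / ENNReal.ofReal (pG w.1))
            (g z.1, z.2) * ENNReal.ofReal (pX z.1) ∂(μ.prod ν) :=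
          lintegral_congr fun z => hofs z
      _ = ∫⁻ w : ((Fin d → ℝ) × Y), (ENNReal.ofReal (pGY w) / ENNReal.ofReal (pG w.1))
            * ENNReal.ofReal (pG w.1) ∂(ρ.prod ν) := hK _ hχSmeas
      _ = ∫⁻ w, ENNReal.ofReal (pGY w) ∂(ρ.prod ν) := lintegral_congr hcancel
      _ = 1 := hGuniv
  have h_int_s : Integrable (fun z : X × Y => pGY (g z.1, z.2) * pX z.1 / pG (g z.1))
      (μ.prod ν) := by
    refine ⟨hsmeas.aestronglyMeasurable, ?_⟩
    rw [hasFiniteIntegral_iff_ofReal (ae_of_all _ hs_nonneg), hS_lint]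
    exact ENNReal.one_lt_top
  -- measure identity for `s`
  have hM2 : Measure.map (fun z : X × Y => (g z.1, z.2))
      ((μ.prod ν).withDensity fun z =>
        ENNReal.ofReal (pGY (g z.1, z.2) * pX z.1 / pG (g z.1)))
      = (ρ.prod ν).withDensity fun w => ENNReal.ofReal (pGY w) := by
    ext E hE
    rw [Measure.map_apply hTmeas hE, withDensity_apply _ (hTmeas hE), withDensity_apply _ hE]
    have hχ : Measurable (fun w : ((Fin d → ℝ) × Y) => E.indicator (fun _ => (1 : ℝ≥0∞)) w
        * (ENNReal.ofReal (pGY w) / ENNReal.ofReal (pG w.1))) :=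
      (measurable_one.indicator hE).mul hχSmeas
    calc ∫⁻ z in (fun z : X × Y => (g z.1, z.2)) ⁻¹' E,
          ENNReal.ofReal (pGY (g z.1, z.2) * pX z.1 / pG (g z.1)) ∂(μ.prod ν)
        = ∫⁻ z, ((fun z : X × Y => (g z.1, z.2)) ⁻¹' E).indicator
            (fun z : X × Y => ENNReal.ofReal (pGY (g z.1, z.2) * pX z.1 / pG (g z.1))) z
            ∂(μ.prod ν) := (lintegral_indicator (hTmeas hE) _).symm
      _ = ∫⁻ z : X × Y, (fun w : ((Fin d → ℝ) × Y) => E.indicator (fun _ => (1 : ℝ≥0∞)) w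
            * (ENNReal.ofReal (pGY w) / ENNReal.ofReal (pG w.1))) (g z.1, z.2)
            * ENNReal.ofReal (pX z.1) ∂(μ.prod ν) := by
          refine lintegral_congr fun z => ?_
          by_cases hz : (g z.1, z.2) ∈ E
          · simp only [Set.indicator_of_mem hz, Set.indicator_of_mem
              (show z ∈ (fun z : X × Y => (g z.1, z.2)) ⁻¹' E from hz), one_mul]
            exact hofs z
          · simp [Set.indicator_of_notMem hz, Set.indicator_of_notMem
              (show z ∉ (fun z : X × Y => (g z.1, z.2)) ⁻¹' E from hz)]
      _ = ∫⁻ w : ((Fin d → ℝ) × Y), (E.indicator (fun _ => (1 : ℝ≥0∞)) w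
            * (ENNReal.ofReal (pGY w) / ENNReal.ofReal (pG w.1)))
            * ENNReal.ofReal (pG w.1) ∂(ρ.prod ν) := hK _ hχ
      _ = ∫⁻ w : ((Fin d → ℝ) × Y), E.indicator (fun w : ((Fin d → ℝ) × Y) => ENNReal.ofReal (pGY w)) w ∂(ρ.prod ν) := by
          refine lintegral_congr fun w => ?_
          by_cases hw : w ∈ E
          · simp only [Set.indicator_of_mem hw, one_mul]
            exact hcancel w
          · simp [Set.indicator_of_notMem hw]
      _ = ∫⁻ w in E, ENNReal.ofReal (pGY w) ∂(ρ.prod ν) := lintegral_indicator hE _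
  -- measure identity for `q`
  have hM3 : Measure.map (fun z : X × Y => (g z.1, z.2))
      ((μ.prod ν).withDensity fun z => ENNReal.ofReal (pX z.1 * pY z.2))
      = (ρ.prod ν).withDensity fun w => ENNReal.ofReal (pG w.1 * pY w.2) := by
    ext E hE
    rw [Measure.map_apply hTmeas hE, withDensity_apply _ (hTmeas hE), withDensity_apply _ hE]
    have hχ : Measurable (fun w : ((Fin d → ℝ) × Y) => E.indicator (fun _ => (1 : ℝ≥0∞)) w
        * ENNReal.ofReal (pY w.2)) :=
      (measurable_one.indicator hE).mul ((hpYmeas.comp measurable_snd).ennreal_ofReal)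
    calc ∫⁻ z in (fun z : X × Y => (g z.1, z.2)) ⁻¹' E,
          ENNReal.ofReal (pX z.1 * pY z.2) ∂(μ.prod ν)
        = ∫⁻ z, ((fun z : X × Y => (g z.1, z.2)) ⁻¹' E).indicator
            (fun z : X × Y => ENNReal.ofReal (pX z.1 * pY z.2)) z ∂(μ.prod ν) :=
          (lintegral_indicator (hTmeas hE) _).symm
      _ = ∫⁻ z : X × Y, (fun w : ((Fin d → ℝ) × Y) => E.indicator (fun _ => (1 : ℝ≥0∞)) w
            * ENNReal.ofReal (pY w.2)) (g z.1, z.2) * ENNReal.ofReal (pX z.1) ∂(μ.prod ν) := by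
          refine lintegral_congr fun z => ?_
          by_cases hz : (g z.1, z.2) ∈ E
          · simp only [Set.indicator_of_mem hz, Set.indicator_of_mem
              (show z ∈ (fun z : X × Y => (g z.1, z.2)) ⁻¹' E from hz), one_mul]
            rw [ENNReal.ofReal_mul (hpXpos z.1).le, mul_comm]
          · simp [Set.indicator_of_notMem hz, Set.indicator_of_notMem
              (show z ∉ (fun z : X × Y => (g z.1, z.2)) ⁻¹' E from hz)]
      _ = ∫⁻ w : ((Fin d → ℝ) × Y), (E.indicator (fun _ => (1 : ℝ≥0∞)) w * ENNReal.ofReal (pY w.2))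
            * ENNReal.ofReal (pG w.1) ∂(ρ.prod ν) := hK _ hχ
      _ = ∫⁻ w : ((Fin d → ℝ) × Y), E.indicator (fun w : ((Fin d → ℝ) × Y) => ENNReal.ofReal (pG w.1 * pY w.2)) w
            ∂(ρ.prod ν) := by
          refine lintegral_congr fun w => ?_
          by_cases hw : w ∈ E
          · simp only [Set.indicator_of_mem hw, one_mul]
            rw [ENNReal.ofReal_mul (hpGpos w.1).le, mul_comm]
          · simp [Set.indicator_of_notMem hw]
      _ = ∫⁻ w in E, ENNReal.ofReal (pG w.1 * pY w.2) ∂(ρ.prod ν) := lintegral_indicator hE _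
  -- Bochner change-of-variables
  have hTB : ∀ (den : X × Y → ℝ) (den' : ((Fin d → ℝ) × Y) → ℝ), Measurable den → Measurable den' →
      (∀ z, 0 ≤ den z) → (∀ w, 0 ≤ den' w) →
      Measure.map (fun z : X × Y => (g z.1, z.2))
        ((μ.prod ν).withDensity fun z => ENNReal.ofReal (den z))
        = (ρ.prod ν).withDensity (fun w => ENNReal.ofReal (den' w)) →
      ∀ φ : ((Fin d → ℝ) × Y) → ℝ, Measurable φ →
        ∫ z, φ (g z.1, z.2) * den z ∂(μ.prod ν) = ∫ w, φ w * den' w ∂(ρ.prod ν) := by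
    intro den den' hden hden' hden0 hden'0 hmapd φ hφ
    have hd1 : (μ.prod ν).withDensity (fun z => ENNReal.ofReal (den z))
        = (μ.prod ν).withDensity (fun z => ((den z).toNNReal : ℝ≥0∞)) := rfl
    have hd2 : (ρ.prod ν).withDensity (fun w => ENNReal.ofReal (den' w))
        = (ρ.prod ν).withDensity (fun w => ((den' w).toNNReal : ℝ≥0∞)) := rfl
    calc ∫ z, φ (g z.1, z.2) * den z ∂(μ.prod ν)
        = ∫ z, (den z).toNNReal • φ (g z.1, z.2) ∂(μ.prod ν) := by
          refine integral_congr_ae (ae_of_all _ fun z => ?_)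
          simp only [NNReal.smul_def, Real.coe_toNNReal _ (hden0 z), smul_eq_mul, mul_comm]
      _ = ∫ z, φ ((fun z : X × Y => (g z.1, z.2)) z)
            ∂((μ.prod ν).withDensity fun z => ENNReal.ofReal (den z)) := by
          rw [hd1, integral_withDensity_eq_integral_smul hden.real_toNNReal]
      _ = ∫ w, φ w ∂(Measure.map (fun z : X × Y => (g z.1, z.2))
            ((μ.prod ν).withDensity fun z => ENNReal.ofReal (den z))) :=
          (integral_map hTmeas.aemeasurable hφ.aestronglyMeasurable).symm
      _ = ∫ w, φ w ∂((ρ.prod ν).withDensity fun w => ENNReal.ofReal (den' w)) := by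
          rw [hmapd]
      _ = ∫ w, (den' w).toNNReal • φ w ∂(ρ.prod ν) := by
          rw [hd2, integral_withDensity_eq_integral_smul hden'.real_toNNReal]
      _ = ∫ w, φ w * den' w ∂(ρ.prod ν) := by
          refine integral_congr_ae (ae_of_all _ fun w => ?_)
          simp only [NNReal.smul_def, Real.coe_toNNReal _ (hden'0 w), smul_eq_mul, mul_comm]
  -- transfer of the second mutual information
  have hB2 : ∫ z : X × Y, pX z.1 * pY z.2
        * f (pGY (g z.1, z.2) / (pG (g z.1) * pY z.2)) ∂(μ.prod ν)
      = ∫ w : ((Fin d → ℝ) × Y), pG w.1 * pY w.2 * f (pGY w / (pG w.1 * pY w.2)) ∂(ρ.prod ν) := by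
    have h := hTB (fun z => pX z.1 * pY z.2) (fun w => pG w.1 * pY w.2)
      ((hpXmeas.comp measurable_fst).mul (hpYmeas.comp measurable_snd))
      ((hpGmeas.comp measurable_fst).mul (hpYmeas.comp measurable_snd))
      (fun z => (hq_pos z).le) (fun w => (hq'_pos w).le) hM3
      (fun w => f (pGY w / (pG w.1 * pY w.2))) hfr'_meas
    calc ∫ z : X × Y, pX z.1 * pY z.2
          * f (pGY (g z.1, z.2) / (pG (g z.1) * pY z.2)) ∂(μ.prod ν)
        = ∫ z : X × Y, f (pGY (g z.1, z.2) / (pG (g z.1) * pY z.2))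
            * (pX z.1 * pY z.2) ∂(μ.prod ν) := by
          exact integral_congr_ae (ae_of_all _ fun z => mul_comm _ _)
      _ = ∫ w : ((Fin d → ℝ) × Y), f (pGY w / (pG w.1 * pY w.2)) * (pG w.1 * pY w.2) ∂(ρ.prod ν) := h
      _ = ∫ w : ((Fin d → ℝ) × Y), pG w.1 * pY w.2 * f (pGY w / (pG w.1 * pY w.2)) ∂(ρ.prod ν) :=
          integral_congr_ae (ae_of_all _ fun w => mul_comm _ _)
  -- integrability transfer
  have h_int_frT : Integrable (fun z : X × Y => pX z.1 * pY z.2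
      * f (pGY (g z.1, z.2) / (pG (g z.1) * pY z.2))) (μ.prod ν) := by
    have hq'm : Measurable (fun w : ((Fin d → ℝ) × Y) => (pG w.1 * pY w.2).toNNReal) :=
      ((hpGmeas.comp measurable_fst).mul (hpYmeas.comp measurable_snd)).real_toNNReal
    have hqm : Measurable (fun z : X × Y => (pX z.1 * pY z.2).toNNReal) :=
      ((hpXmeas.comp measurable_fst).mul (hpYmeas.comp measurable_snd)).real_toNNReal
    have h1 : Integrable (fun w : ((Fin d → ℝ) × Y) => f (pGY w / (pG w.1 * pY w.2)))
        ((ρ.prod ν).withDensity fun w => ENNReal.ofReal (pG w.1 * pY w.2)) := by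
      rw [show ((ρ.prod ν).withDensity fun w => ENNReal.ofReal (pG w.1 * pY w.2))
        = ((ρ.prod ν).withDensity fun w => ((pG w.1 * pY w.2).toNNReal : ℝ≥0∞)) from rfl,
        integrable_withDensity_iff_integrable_smul hq'm]
      refine hintGY.congr (ae_of_all _ fun w => ?_)
      simp only [NNReal.smul_def, Real.coe_toNNReal _ (hq'_pos w).le, smul_eq_mul]
    rw [← hM3] at h1
    have h2 : Integrable (fun z : X × Y => f (pGY (g z.1, z.2) / (pG (g z.1) * pY z.2)))
        ((μ.prod ν).withDensity fun z => ENNReal.ofReal (pX z.1 * pY z.2)) := by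
      have := (integrable_map_measure hfr'_meas.aestronglyMeasurable
        hTmeas.aemeasurable).mp h1
      exact this
    rw [show ((μ.prod ν).withDensity fun z => ENNReal.ofReal (pX z.1 * pY z.2))
      = ((μ.prod ν).withDensity fun z => ((pX z.1 * pY z.2).toNNReal : ℝ≥0∞)) from rfl,
      integrable_withDensity_iff_integrable_smul hqm] at h2
    refine h2.congr (ae_of_all _ fun z => ?_)
    simp only [NNReal.smul_def, Real.coe_toNNReal _ (hq_pos z).le, smul_eq_mul]
  constructor
  · -- forward direction
    intro hEq
    -- the integrable difference G
    have h_int_G : Integrable (fun z : X × Y =>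
        pX z.1 * pY z.2 * f (pXY z / (pX z.1 * pY z.2))
          - pX z.1 * pY z.2 * f (pGY (g z.1, z.2) / (pG (g z.1) * pY z.2))) (μ.prod ν) :=
      hintXY.sub h_int_frT
    have hIntG : ∫ z, (pX z.1 * pY z.2 * f (pXY z / (pX z.1 * pY z.2))
        - pX z.1 * pY z.2 * f (pGY (g z.1, z.2) / (pG (g z.1) * pY z.2))) ∂(μ.prod ν)
        = 0 := by
      rw [integral_sub hintXY h_int_frT, hB2, hEq, sub_self]
    -- subgradient function
    have hcWmeas : Measurable (fun w : ((Fin d → ℝ) × Y) => lowerSlope f (pGY w / (pG w.1 * pY w.2))) :=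
      lowerSlope_comp_measurable hconv hr'meas hr'_pos
    set cW : ((Fin d → ℝ) × Y) → ℝ := fun w => lowerSlope f (pGY w / (pG w.1 * pY w.2)) with hcW
    -- truncation sets
    set E : ℕ → Set ((Fin d → ℝ) × Y) := fun n => {w | |cW w| ≤ (n : ℝ)} with hEdef
    have hEmeas : ∀ n, MeasurableSet (E n) :=
      fun n => measurableSet_le hcWmeas.abs measurable_const
    set F : ℕ → Set (X × Y) := fun n => (fun z : X × Y => (g z.1, z.2)) ⁻¹' E n with hFdef
    have hFmeas : ∀ n, MeasurableSet (F n) := fun n => hTmeas (hEmeas n)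
    have hFmono : Monotone F := by
      intro m n hmn z hz
      simp only [hFdef, hEdef, Set.mem_preimage, Set.mem_setOf_eq] at hz ⊢
      exact le_trans hz (Nat.cast_le.2 hmn)
    have hFunion : ⋃ n, F n = univ := by
      ext z
      simp only [Set.mem_iUnion, Set.mem_univ, iff_true]
      obtain ⟨n, hn⟩ := exists_nat_ge (|cW (g z.1, z.2)|)
      exact ⟨n, hn⟩
    -- truncated subgradient
    set ψ : ℕ → ((Fin d → ℝ) × Y) → ℝ := fun n => (E n).indicator cW with hψdef
    have hψmeas : ∀ n, Measurable (ψ n) := fun n => hcWmeas.indicator (hEmeas n)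
    have hψbdd : ∀ n, ∀ w, ‖ψ n w‖ ≤ (n : ℝ) := by
      intro n w
      by_cases hw : w ∈ E n
      · simp only [hψdef, Set.indicator_of_mem hw, Real.norm_eq_abs]
        exact hw
      · simp only [hψdef, Set.indicator_of_notMem hw, norm_zero]
        positivity
    have hℓ_int1 : ∀ n, Integrable (fun z : X × Y => ψ n (g z.1, z.2) * pXY z) (μ.prod ν) :=
      fun n => h_int_pXY.bdd_mul ((hψmeas n).comp hTmeas).aestronglyMeasurable
        (ae_of_all _ fun z => hψbdd n _)
    have hℓ_int2 : ∀ n, Integrable (fun z : X × Y =>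
        ψ n (g z.1, z.2) * (pGY (g z.1, z.2) * pX z.1 / pG (g z.1))) (μ.prod ν) :=
      fun n => h_int_s.bdd_mul ((hψmeas n).comp hTmeas).aestronglyMeasurable
        (ae_of_all _ fun z => hψbdd n _)
    have hℓzero : ∀ n, ∫ z, (ψ n (g z.1, z.2) * pXY z
        - ψ n (g z.1, z.2) * (pGY (g z.1, z.2) * pX z.1 / pG (g z.1))) ∂(μ.prod ν) = 0 := by
      intro n
      rw [integral_sub (hℓ_int1 n) (hℓ_int2 n)]
      have e1 := hTB pXY pGY hpXYmeas hpGYmeas (fun z => (hpXYpos z).le)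
        (fun w => (hpGYpos w).le) hmap (ψ n) (hψmeas n)
      have e2 := hTB (fun z => pGY (g z.1, z.2) * pX z.1 / pG (g z.1)) pGY hsmeas hpGYmeas
        hs_nonneg (fun w => (hpGYpos w).le) hM2 (ψ n) (hψmeas n)
      rw [e1, e2, sub_self]
    -- the nonnegative defect function D
    set D : X × Y → ℝ := fun z =>
      pX z.1 * pY z.2 * f (pXY z / (pX z.1 * pY z.2))
        - pX z.1 * pY z.2 * f (pGY (g z.1, z.2) / (pG (g z.1) * pY z.2))
        - cW (g z.1, z.2) * (pXY z - pGY (g z.1, z.2) * pX z.1 / pG (g z.1)) with hDdef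
    have hDmeas : Measurable D := by
      apply Measurable.sub
      · exact (((hpXmeas.comp measurable_fst).mul (hpYmeas.comp measurable_snd)).mul
          hfr_meas).sub
          (((hpXmeas.comp measurable_fst).mul (hpYmeas.comp measurable_snd)).mul
            (hfr'_meas.comp hTmeas))
      · exact (hcWmeas.comp hTmeas).mul (hpXYmeas.sub hsmeas)
    -- key algebraic identity and positivity
    have hDkey : ∀ z : X × Y, 0 ≤ D z ∧
        (pXY z * pG (g z.1) ≠ pGY (g z.1, z.2) * pX z.1 → 0 < D z) := by
      intro z
      have hapos : 0 < pXY z / (pX z.1 * pY z.2) := hr_pos z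
      have hbpos : 0 < pGY (g z.1, z.2) / (pG (g z.1) * pY z.2) := hr'_pos (g z.1, z.2)
      have hqz : (0:ℝ) < pX z.1 * pY z.2 := hq_pos z
      have hpXne : pX z.1 ≠ 0 := ne_of_gt (hpXpos z.1)
      have hpYne : pY z.2 ≠ 0 := ne_of_gt (hpYpos z.2)
      have hpGne : pG (g z.1) ≠ 0 := ne_of_gt (hpGpos (g z.1))
      have h1 : pX z.1 * pY z.2 * (pXY z / (pX z.1 * pY z.2)) = pXY z := by
        field_simp
      have h2 : pX z.1 * pY z.2 * (pGY (g z.1, z.2) / (pG (g z.1) * pY z.2))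
          = pGY (g z.1, z.2) * pX z.1 / pG (g z.1) := by
        field_simp
      have hDz : D z = pX z.1 * pY z.2
          * (f (pXY z / (pX z.1 * pY z.2))
              - f (pGY (g z.1, z.2) / (pG (g z.1) * pY z.2))
              - lowerSlope f (pGY (g z.1, z.2) / (pG (g z.1) * pY z.2))
                  * (pXY z / (pX z.1 * pY z.2)
                      - pGY (g z.1, z.2) / (pG (g z.1) * pY z.2))) := by
        rw [hDdef]
        simp only [hcW]
        linear_combination
          (lowerSlope f (pGY (g z.1, z.2) / (pG (g z.1) * pY z.2))) * h1
            - (lowerSlope f (pGY (g z.1, z.2) / (pG (g z.1) * pY z.2))) * h2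
      constructor
      · rcases eq_or_ne (pXY z / (pX z.1 * pY z.2))
            (pGY (g z.1, z.2) / (pG (g z.1) * pY z.2)) with hab | hab
        · rw [hDz, hab]; ring_nf; exact le_refl 0
        · have := lowerSlope_subgradient hconv hapos hbpos hab
          rw [hDz]
          have hin : 0 < f (pXY z / (pX z.1 * pY z.2))
              - f (pGY (g z.1, z.2) / (pG (g z.1) * pY z.2))
              - lowerSlope f (pGY (g z.1, z.2) / (pG (g z.1) * pY z.2))
                  * (pXY z / (pX z.1 * pY z.2)
                      - pGY (g z.1, z.2) / (pG (g z.1) * pY z.2)) := by linarith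
          positivity
      · intro hne
        have hab : pXY z / (pX z.1 * pY z.2) ≠ pGY (g z.1, z.2) / (pG (g z.1) * pY z.2) := by
          intro habs
          apply hne
          have h3 := (div_eq_div_iff (ne_of_gt hqz)
            (ne_of_gt (hq'_pos (g z.1, z.2)))).mp habs
          have : (pXY z * pG (g z.1)) * pY z.2 = (pGY (g z.1, z.2) * pX z.1) * pY z.2 := by
            linear_combination h3
          exact mul_right_cancel₀ hpYne this
        have := lowerSlope_subgradient hconv hapos hbpos hab
        rw [hDz]
        have hin : 0 < f (pXY z / (pX z.1 * pY z.2))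
            - f (pGY (g z.1, z.2) / (pG (g z.1) * pY z.2))
            - lowerSlope f (pGY (g z.1, z.2) / (pG (g z.1) * pY z.2))
                * (pXY z / (pX z.1 * pY z.2)
                    - pGY (g z.1, z.2) / (pG (g z.1) * pY z.2)) := by linarith
        positivity
    -- indicator identity
    have hD_eq : ∀ n, ∀ z : X × Y, (F n).indicator D z
        = (F n).indicator (fun z : X × Y =>
            pX z.1 * pY z.2 * f (pXY z / (pX z.1 * pY z.2))
              - pX z.1 * pY z.2 * f (pGY (g z.1, z.2) / (pG (g z.1) * pY z.2))) z
          - (ψ n (g z.1, z.2) * pXY z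
              - ψ n (g z.1, z.2) * (pGY (g z.1, z.2) * pX z.1 / pG (g z.1))) := by
      intro n z
      by_cases hz : z ∈ F n
      · have hz' : (g z.1, z.2) ∈ E n := hz
        rw [Set.indicator_of_mem hz, Set.indicator_of_mem hz, hψdef]
        simp only [Set.indicator_of_mem hz']
        rw [hDdef]
        ring
      · have hz' : (g z.1, z.2) ∉ E n := hz
        rw [Set.indicator_of_notMem hz, Set.indicator_of_notMem hz, hψdef]
        simp only [Set.indicator_of_notMem hz']
        ring
    have hℓ_int : ∀ n, Integrable (fun z : X × Y => ψ n (g z.1, z.2) * pXY z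
        - ψ n (g z.1, z.2) * (pGY (g z.1, z.2) * pX z.1 / pG (g z.1))) (μ.prod ν) :=
      fun n => (hℓ_int1 n).sub (hℓ_int2 n)
    have hDn_int : ∀ n, Integrable ((F n).indicator D) (μ.prod ν) := by
      intro n
      refine (((h_int_G.indicator (hFmeas n)).sub (hℓ_int n)).congr
        (ae_of_all _ fun z => ?_))
      exact (hD_eq n z).symm
    have hDn_val : ∀ n, ∫ z, (F n).indicator D z ∂(μ.prod ν)
        = ∫ z in F n, (pX z.1 * pY z.2 * f (pXY z / (pX z.1 * pY z.2))
            - pX z.1 * pY z.2 * f (pGY (g z.1, z.2) / (pG (g z.1) * pY z.2))) ∂(μ.prod ν) := by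
      intro n
      rw [integral_congr_ae (ae_of_all _ (hD_eq n)),
        integral_sub (h_int_G.indicator (hFmeas n)) (hℓ_int n),
        integral_sub (hℓ_int1 n) (hℓ_int2 n)]
      have e1 := hTB pXY pGY hpXYmeas hpGYmeas (fun z => (hpXYpos z).le)
        (fun w => (hpGYpos w).le) hmap (ψ n) (hψmeas n)
      have e2 := hTB (fun z => pGY (g z.1, z.2) * pX z.1 / pG (g z.1)) pGY hsmeas hpGYmeas
        hs_nonneg (fun w => (hpGYpos w).le) hM2 (ψ n) (hψmeas n)
      rw [e1, e2, sub_self, sub_zero, integral_indicator (hFmeas n)]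
    -- monotone convergence
    have hmono : Monotone (fun n => fun z : X × Y => ENNReal.ofReal ((F n).indicator D z)) := by
      intro m n hmn z
      simp only
      by_cases hz : z ∈ F m
      · rw [Set.indicator_of_mem hz, Set.indicator_of_mem (hFmono hmn hz)]
      · rw [Set.indicator_of_notMem hz]
        simp only [ENNReal.ofReal_zero, zero_le]
    have hsup : ∀ z : X × Y, (⨆ n, ENNReal.ofReal ((F n).indicator D z))
        = ENNReal.ofReal (D z) := by
      intro z
      have hzmem : ∃ n, z ∈ F n := by
        obtain ⟨n, hn⟩ := exists_nat_ge (|cW (g z.1, z.2)|)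
        exact ⟨n, hn⟩
      obtain ⟨n, hn⟩ := hzmem
      refine le_antisymm (iSup_le fun m => ?_) ?_
      · by_cases hz : z ∈ F m
        · rw [Set.indicator_of_mem hz]
        · rw [Set.indicator_of_notMem hz]; simp
      · refine le_iSup_of_le n ?_
        rw [Set.indicator_of_mem hn]
    have hMCT : ∫⁻ z, ENNReal.ofReal (D z) ∂(μ.prod ν)
        = ⨆ n, ∫⁻ z, ENNReal.ofReal ((F n).indicator D z) ∂(μ.prod ν) := by
      rw [← lintegral_iSup (fun n => (hDmeas.indicator (hFmeas n)).ennreal_ofReal) hmono]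
      exact lintegral_congr fun z => (hsup z).symm
    have heval : ∀ n, ∫⁻ z, ENNReal.ofReal ((F n).indicator D z) ∂(μ.prod ν)
        = ENNReal.ofReal (∫ z, (F n).indicator D z ∂(μ.prod ν)) := by
      intro n
      rw [ofReal_integral_eq_lintegral_ofReal (hDn_int n)
        (ae_of_all _ fun z => Set.indicator_nonneg (fun z _ => (hDkey z).1) z)]
    have htend : Tendsto (fun n => ∫ z, (F n).indicator D z ∂(μ.prod ν)) atTop (𝓝 0) := by
      have h1 : Tendsto (fun n => ∫ z in F n,
          (pX z.1 * pY z.2 * f (pXY z / (pX z.1 * pY z.2))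
            - pX z.1 * pY z.2 * f (pGY (g z.1, z.2) / (pG (g z.1) * pY z.2))) ∂(μ.prod ν))
          atTop (𝓝 (∫ z in ⋃ n, F n,
            (pX z.1 * pY z.2 * f (pXY z / (pX z.1 * pY z.2))
              - pX z.1 * pY z.2 * f (pGY (g z.1, z.2) / (pG (g z.1) * pY z.2))) ∂(μ.prod ν))) :=
        tendsto_setIntegral_of_monotone hFmeas hFmono (h_int_G.integrableOn)
      rw [hFunion] at h1
      rw [Measure.restrict_univ, hIntG] at h1
      refine h1.congr fun n => (hDn_val n).symm
    have hDlint : ∫⁻ z, ENNReal.ofReal (D z) ∂(μ.prod ν) = 0 := by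
      have h2 : Tendsto (fun n => ∫⁻ z, ENNReal.ofReal ((F n).indicator D z) ∂(μ.prod ν))
          atTop (𝓝 (⨆ n, ∫⁻ z, ENNReal.ofReal ((F n).indicator D z) ∂(μ.prod ν))) :=
        tendsto_atTop_iSup (fun m n hmn => lintegral_mono fun z => hmono hmn z)
      have h3 : Tendsto (fun n => ∫⁻ z, ENNReal.ofReal ((F n).indicator D z) ∂(μ.prod ν))
          atTop (𝓝 0) := by
        have := ENNReal.tendsto_ofReal htend
        rw [ENNReal.ofReal_zero] at this
        refine this.congr fun n => (heval n).symm
      rw [hMCT, ← tendsto_nhds_unique h2 h3]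
    have hDae : ∀ᵐ z ∂(μ.prod ν), ENNReal.ofReal (D z) = 0 := by
      have := (lintegral_eq_zero_iff hDmeas.ennreal_ofReal).mp hDlint
      filter_upwards [this] with z hz using hz
    filter_upwards [hDae] with z hz
    by_contra hne
    have hpos := (hDkey z).2 hne
    rw [ENNReal.ofReal_eq_zero] at hz
    linarith
  · -- reverse direction
    intro hae
    have hcong : ∀ᵐ z ∂(μ.prod ν),
        pX z.1 * pY z.2 * f (pXY z / (pX z.1 * pY z.2))
          = pX z.1 * pY z.2 * f (pGY (g z.1, z.2) / (pG (g z.1) * pY z.2)) := by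
      filter_upwards [hae] with z hz
      have h1 : pXY z / (pX z.1 * pY z.2) = pGY (g z.1, z.2) / (pG (g z.1) * pY z.2) := by
        rw [div_eq_div_iff (ne_of_gt (hq_pos z)) (ne_of_gt (hq'_pos (g z.1, z.2)))]
        linear_combination pY z.2 * hz
      rw [h1]
    rw [integral_congr_ae hcong, hB2]
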